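/- Let (X, δ) be a complete diversity and let D ⊆ X be a dense subset (with respect to the induced metric) such that the restricted diversity (D, δ) has the approximate extension property. Then (X, δ) has the approximate extension property. -/

import Mathlib

open scoped Classical

/-- A diversity on `X`: a real-valued function on finite subsets satisfying
(D1) nonnegativity with `δ A = 0 ↔ |A| ≤ 1`, and (D2) the triangle inequality. -/
structure Diversity (X : Type*) where
  δ : Finset X → ℝ
  nonneg : ∀ A : Finset X, 0 ≤ δ A
  eq_zero_iff : ∀ A : Finset X, δ A = 0 ↔ A.card ≤ 1
  triangle : ∀ A B C : Finset X, B.Nonempty → δ (A ∪ C) ≤ δ (A ∪ B) + δ (B ∪ C)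

/-- An admissible function on a diversity (a one-point extension). -/
structure IsAdmissible {X : Type*} (D : Diversity X) (f : Finset X → ℝ) : Prop where
  empty : f ∅ = 0
  le : ∀ A : Finset X, D.δ A ≤ f A
  tri : ∀ A B C : Finset X, C.Nonempty → f (A ∪ B) ≤ f (A ∪ C) + D.δ (B ∪ C)
  subadd : ∀ A B : Finset X, f (A ∪ B) ≤ f A + f B

/-- Restriction of a diversity to a subset. -/
noncomputable def Diversity.restrict {X : Type*} (D : Diversity X) (S : Set X) : Diversity S where
  δ A := D.δ (A.image Subtype.val)
  nonneg A := D.nonneg _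
  eq_zero_iff A := by
    rw [D.eq_zero_iff, Finset.card_image_of_injective _ Subtype.val_injective]
  triangle A B C hB := by
    have h := D.triangle (A.image Subtype.val) (B.image Subtype.val) (C.image Subtype.val)
      (hB.image _)
    simpa [Finset.image_union] using h

/-- Separability of the induced metric `d a b = δ {a, b}`. -/
def Diversity.SeparableD {X : Type*} (D : Diversity X) : Prop :=
  ∃ s : Set X, s.Countable ∧ ∀ x : X, ∀ ε : ℝ, 0 < ε → ∃ y ∈ s, D.δ {x, y} < ε

/-- Completeness of the induced metric `d a b = δ {a, b}`. -/
def Diversity.CompleteD {X : Type*} (D : Diversity X) : Prop :=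
  ∀ u : ℕ → X, (∀ ε : ℝ, 0 < ε → ∃ N : ℕ, ∀ m ≥ N, ∀ n ≥ N, D.δ {u m, u n} < ε) →
    ∃ x : X, ∀ ε : ℝ, 0 < ε → ∃ N : ℕ, ∀ n ≥ N, D.δ {u n, x} < ε

/-- The diversity `δ̂` on (finite sets of) admissible functions. -/
noncomputable def hatδ {X : Type*} (F : Finset (Finset X → ℝ)) : ℝ :=
  if F.card ≤ 1 then 0
  else sSup { r : ℝ | ∃ j ∈ F, ∃ A : (Finset X → ℝ) → Finset X,
    r = j ((F.erase j).biUnion A) - ∑ i ∈ F.erase j, i (A i) }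

/-- The canonical maximal extension `f_S^X` of an admissible function on `S ⊆ X`. -/
noncomputable def extFun {X : Type*} (D : Diversity X) (S : Set X) (f : Finset S → ℝ)
    (A : Finset X) : ℝ :=
  sInf { r : ℝ | ∃ (B : Finset S) (As : S → Finset X),
    B.biUnion As = A ∧ r = f B + ∑ b ∈ B, D.δ (insert (b : X) (As b)) }

/-- An admissible function is finitely supported if it is the canonical extension
of an admissible function on some finite nonempty `S ⊆ X`. -/
def FinitelySupported {X : Type*} (D : Diversity X) (f : Finset X → ℝ) : Prop :=
  ∃ S : Set X, S.Finite ∧ S.Nonempty ∧ ∃ g : Finset S → ℝ,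
    IsAdmissible (D.restrict S) g ∧ f = extFun D S g

/-- The extension property for a diversity. -/
def Diversity.ExtensionProp {X : Type*} (D : Diversity X) : Prop :=
  ∀ F : Finset X, ∀ f : Finset ((F : Set X)) → ℝ,
    IsAdmissible (D.restrict (F : Set X)) f →
    ∃ x : X, ∀ A : Finset ((F : Set X)), D.δ (insert x (A.image Subtype.val)) = f A

/-- The approximate extension property for a diversity. -/
def Diversity.ApproxExtensionProp {X : Type*} (D : Diversity X) : Prop :=
  ∀ F : Finset X, ∀ f : Finset ((F : Set X)) → ℝ,
    IsAdmissible (D.restrict (F : Set X)) f →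
    ∀ ε : ℝ, 0 < ε →
      ∃ x : X, ∀ A : Finset ((F : Set X)), |D.δ (insert x (A.image Subtype.val)) - f A| ≤ ε

/-- Ultrahomogeneity: isomorphisms between finite subsets extend to automorphisms. -/
def Diversity.Ultrahomogeneous {X : Type*} (D : Diversity X) : Prop :=
  ∀ (A A' : Finset X) (φ : ((A : Set X)) → ((A' : Set X))), Function.Bijective φ →
    (∀ B : Finset ((A : Set X)),
      D.δ (B.image (fun b => (φ b : X))) = D.δ (B.image Subtype.val)) →
    ∃ Φ : X → X, Function.Bijective Φ ∧ (∀ C : Finset X, D.δ (C.image Φ) = D.δ C) ∧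
      ∀ a : ((A : Set X)), Φ a = (φ a : X)
namespace DivAux

variable {X : Type*} (D : Diversity X)

lemma delta_empty : D.δ ∅ = 0 := (D.eq_zero_iff ∅).2 (by simp)

lemma delta_singleton (a : X) : D.δ {a} = 0 := (D.eq_zero_iff _).2 (by simp)

lemma union_single (a : X) (s : Finset X) : s ∪ {a} = insert a s := by
  rw [Finset.union_comm, ← Finset.insert_eq]

lemma delta_insert_mono (a : X) (s : Finset X) : D.δ s ≤ D.δ (insert a s) := by
  have h := D.triangle s {a} ∅ (by simp)
  simpa [delta_singleton, union_single] using h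

lemma delta_mono {s t : Finset X} (h : s ⊆ t) : D.δ s ≤ D.δ t := by
  have : ∀ u s : Finset X, D.δ s ≤ D.δ (s ∪ u) := by
    intro u
    induction u using Finset.induction_on with
    | empty => intro s; simp
    | insert _ _ hns ih =>
      intro s
      rename_i a u
      calc D.δ s ≤ D.δ (s ∪ u) := ih s
        _ ≤ D.δ (insert a (s ∪ u)) := delta_insert_mono D a _
        _ = D.δ (s ∪ insert a u) := by rw [Finset.union_insert]
  calc D.δ s ≤ D.δ (s ∪ t) := this t s
    _ = D.δ t := by rw [Finset.union_eq_right.mpr h]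

lemma restrict_δ (D : Diversity X) (S : Set X) (A : Finset S) :
    (D.restrict S).δ A = D.δ (A.image Subtype.val) := rfl

/-- triangle-type condition shared by `δ` and admissible functions. -/
def Tri (h : Finset X → ℝ) : Prop :=
  ∀ A B C : Finset X, C.Nonempty → h (A ∪ B) ≤ h (A ∪ C) + D.δ (B ∪ C)

lemma tri_delta : Tri D D.δ := by
  intro A B C hC
  have := D.triangle A C B hC
  simpa [Finset.union_comm C B] using this

lemma tri_mono {h : Finset X → ℝ} (hh : Tri D h) (a : X) (s : Finset X) :
    h s ≤ h (insert a s) := by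
  have := hh s ∅ {a} (by simp)
  simpa [delta_singleton, union_single] using this

lemma tri_biUnion {h : Finset X → ℝ} (hh : Tri D h) {J : Type*}
    (B : Finset J) (e : J → X) (As : J → Finset X) :
    ∀ E : Finset X, h (E ∪ B.biUnion As) ≤
      h (E ∪ B.image e) + ∑ b ∈ B, D.δ (insert (e b) (As b)) := by
  induction B using Finset.induction_on with
  | empty => intro E; simp
  | insert _ _ hns ih =>
    rename_i a B
    intro E
    have h1 : h ((E ∪ As a) ∪ B.biUnion As) ≤
        h ((E ∪ As a) ∪ B.image e) + ∑ b ∈ B, D.δ (insert (e b) (As b)) := ih (E ∪ As a)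
    have h2 : h ((E ∪ B.image e) ∪ As a) ≤
        h ((E ∪ B.image e) ∪ {e a}) + D.δ (As a ∪ {e a}) :=
      hh (E ∪ B.image e) (As a) {e a} (by simp)
    have e1 : (E ∪ As a) ∪ B.biUnion As = E ∪ (insert a B).biUnion As := by
      rw [Finset.biUnion_insert]; ac_rfl
    have e2 : (E ∪ As a) ∪ B.image e = (E ∪ B.image e) ∪ As a := by ac_rfl
    have e3 : (E ∪ B.image e) ∪ {e a} = E ∪ (insert a B).image e := by
      rw [Finset.image_insert, Finset.insert_eq]; ac_rfl
    have e4 : D.δ (As a ∪ {e a}) = D.δ (insert (e a) (As a)) := by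
      rw [union_single]
    rw [e1, e2] at h1; rw [e3, e4] at h2
    rw [Finset.sum_insert hns]
    linarith

lemma swap_le {h : Finset X → ℝ} (hh : Tri D h) (φ : X → X) (A E : Finset X) :
    h (E ∪ A.image φ) ≤ h (E ∪ A) + ∑ a ∈ A, D.δ {a, φ a} := by
  have := tri_biUnion D hh A id (fun a => {φ a}) E
  simpa [Finset.biUnion_singleton] using this

lemma swap_ge {h : Finset X → ℝ} (hh : Tri D h) (φ : X → X) (A E : Finset X) :
    h (E ∪ A) ≤ h (E ∪ A.image φ) + ∑ a ∈ A, D.δ {a, φ a} := by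
  have := tri_biUnion D hh A φ (fun a => {a}) E
  simpa [Finset.pair_comm] using this

end DivAux
namespace DivAux

section Ext

variable {X : Type*} (D : Diversity X) {S : Set X} {f : Finset S → ℝ}

def extSet (D : Diversity X) (S : Set X) (f : Finset S → ℝ) (A : Finset X) : Set ℝ :=
  { r : ℝ | ∃ (B : Finset S) (As : S → Finset X),
    B.biUnion As = A ∧ r = f B + ∑ b ∈ B, D.δ (insert (b : X) (As b)) }

lemma extFun_eq (A : Finset X) : extFun D S f A = sInf (extSet D S f A) := rfl

lemma mem_extSet_ge (hf : IsAdmissible (D.restrict S) f) {A : Finset X} {r : ℝ}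
    (hr : r ∈ extSet D S f A) : D.δ A ≤ r := by
  obtain ⟨B, As, hBA, rfl⟩ := hr
  have h := tri_biUnion D (tri_delta D) B (Subtype.val : S → X) As ∅
  rw [Finset.empty_union, Finset.empty_union, hBA] at h
  have h2 : D.δ (B.image Subtype.val) ≤ f B := hf.le B
  linarith

lemma extSet_nonempty (hSne : S.Nonempty) (A : Finset X) : (extSet D S f A).Nonempty := by
  obtain ⟨b₀, hb₀⟩ := hSne
  exact ⟨_, ⟨{⟨b₀, hb₀⟩}, fun _ => A, by simp, rfl⟩⟩

lemma extSet_bdd (hf : IsAdmissible (D.restrict S) f) (A : Finset X) :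
    BddBelow (extSet D S f A) :=
  ⟨D.δ A, fun _ hr => mem_extSet_ge D hf hr⟩

lemma extFun_le_of_mem (hf : IsAdmissible (D.restrict S) f) {A : Finset X} {r : ℝ}
    (hr : r ∈ extSet D S f A) : extFun D S f A ≤ r :=
  csInf_le (extSet_bdd D hf A) hr

lemma le_extFun (hSne : S.Nonempty) {A : Finset X} {c : ℝ}
    (h : ∀ r ∈ extSet D S f A, c ≤ r) : c ≤ extFun D S f A :=
  le_csInf (extSet_nonempty D hSne A) h

lemma extFun_admissible (hf : IsAdmissible (D.restrict S) f) (hSne : S.Nonempty) :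
    IsAdmissible D (extFun D S f) := by
  letI instS : DecidableEq S := fun a b => Classical.propDecidable (a = b)
  constructor
  · -- empty
    refine le_antisymm ?_ ?_
    · refine extFun_le_of_mem D hf (⟨∅, fun _ => ∅, by simp, by simp [hf.empty]⟩ :
        (0:ℝ) ∈ extSet D S f ∅)
    · refine le_extFun D hSne fun r hr => ?_
      have := mem_extSet_ge D hf hr
      have := D.nonneg (∅ : Finset X)
      linarith
  · -- le
    intro A
    exact le_extFun D hSne fun r hr => mem_extSet_ge D hf hr
  · -- tri
    intro A B C hC
    have key : ∀ r ∈ extSet D S f (A ∪ C), extFun D S f (A ∪ B) ≤ r + D.δ (B ∪ C) := by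
      rintro r ⟨B₀, As, hBA, rfl⟩
      obtain ⟨c₀, hc₀⟩ := hC
      have hc₀' : c₀ ∈ B₀.biUnion As := by
        rw [hBA]; exact Finset.mem_union_right _ hc₀
      obtain ⟨b₁, hb₁, hcb₁⟩ := Finset.mem_biUnion.mp hc₀'
      set As' : S → Finset X := fun b => (As b ∩ A) ∪ (if b = b₁ then B else ∅) with hAs'
      have hBU : B₀.biUnion As' = A ∪ B := by
        ext x
        simp only [hAs', Finset.mem_biUnion, Finset.mem_union, Finset.mem_inter]
        constructor
        · rintro ⟨b, hb, (⟨hx1, hx2⟩ | hx)⟩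
          · exact Or.inl hx2
          · split_ifs at hx with hbb
            · exact Or.inr hx
            · simp at hx
        · rintro (hx | hx)
          · have hx' : x ∈ B₀.biUnion As := by
              rw [hBA]; exact Finset.mem_union_left _ hx
            obtain ⟨b, hb, hxb⟩ := Finset.mem_biUnion.mp hx'
            exact ⟨b, hb, Or.inl ⟨hxb, hx⟩⟩
          · exact ⟨b₁, hb₁, Or.inr (by simp [hx])⟩
      have hpt : ∀ b ∈ B₀, D.δ (insert (b : X) (As' b)) ≤
          D.δ (insert (b : X) (As b)) + (if b = b₁ then D.δ (B ∪ C) else 0) := by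
        intro b hb
        by_cases hbb : b = b₁
        · subst hbb
          rw [if_pos rfl]
          have e1 : insert (b : X) (As' b) = insert (b : X) (As b ∩ A) ∪ B := by
            simp [hAs', Finset.insert_union]
          have t1 : D.δ (insert (b : X) (As b ∩ A) ∪ B) ≤
              D.δ (insert (b : X) (As b ∩ A) ∪ {c₀}) + D.δ ({c₀} ∪ B) :=
            D.triangle _ {c₀} B (by simp)
          have t2 : D.δ (insert (b : X) (As b ∩ A) ∪ {c₀}) ≤ D.δ (insert (b : X) (As b)) := by
            apply delta_mono
            intro x hx
            simp only [Finset.mem_union, Finset.mem_insert, Finset.mem_inter,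
              Finset.mem_singleton] at hx ⊢
            rcases hx with (h1 | ⟨h1, _⟩) | h1
            · exact Or.inl h1
            · exact Or.inr h1
            · exact Or.inr (h1 ▸ hcb₁)
          have t3 : D.δ ({c₀} ∪ B) ≤ D.δ (B ∪ C) := by
            apply delta_mono
            intro x hx
            simp only [Finset.mem_union, Finset.mem_singleton] at hx ⊢
            rcases hx with h1 | h1
            · exact Or.inr (h1 ▸ hc₀)
            · exact Or.inl h1
          rw [e1]
          linarith
        · rw [if_neg hbb]
          have e1 : As' b = As b ∩ A := by rw [hAs']; simp [if_neg hbb]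
          rw [e1, add_zero]
          exact delta_mono D (Finset.insert_subset_insert _ Finset.inter_subset_left)
      have hsum : ∑ b ∈ B₀, D.δ (insert (b : X) (As' b)) ≤
          ∑ b ∈ B₀, D.δ (insert (b : X) (As b)) + D.δ (B ∪ C) := by
        calc ∑ b ∈ B₀, D.δ (insert (b : X) (As' b))
            ≤ ∑ b ∈ B₀, (D.δ (insert (b : X) (As b)) + (if b = b₁ then D.δ (B ∪ C) else 0)) :=
              Finset.sum_le_sum hpt
          _ = ∑ b ∈ B₀, D.δ (insert (b : X) (As b)) +
              ∑ b ∈ B₀, (if b = b₁ then D.δ (B ∪ C) else 0) := Finset.sum_add_distrib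
          _ ≤ ∑ b ∈ B₀, D.δ (insert (b : X) (As b)) + D.δ (B ∪ C) := by
              rw [Finset.sum_ite_eq' B₀ b₁ (fun _ => D.δ (B ∪ C)), if_pos hb₁]
      have hmem : (f B₀ + ∑ b ∈ B₀, D.δ (insert (b : X) (As' b))) ∈ extSet D S f (A ∪ B) :=
        ⟨B₀, As', hBU, rfl⟩
      have := extFun_le_of_mem D hf hmem
      linarith
    have : extFun D S f (A ∪ B) - D.δ (B ∪ C) ≤ extFun D S f (A ∪ C) := by
      refine le_extFun D hSne fun r hr => ?_
      have := key r hr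
      linarith
    linarith
  · -- subadd
    intro A A'
    have key : ∀ r ∈ extSet D S f A, ∀ r' ∈ extSet D S f A',
        extFun D S f (A ∪ A') ≤ r + r' := by
      rintro r ⟨B, As, hBA, rfl⟩ r' ⟨B', As', hBA', rfl⟩
      set As'' : S → Finset X :=
        fun b => (if b ∈ B then As b else ∅) ∪ (if b ∈ B' then As' b else ∅) with hAs''
      have hBU : (B ∪ B').biUnion As'' = A ∪ A' := by
        rw [← hBA, ← hBA']
        ext x
        simp only [hAs'', Finset.mem_biUnion, Finset.mem_union]
        constructor
        · rintro ⟨b, hb, (hx | hx)⟩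
          · split_ifs at hx with h
            · exact Or.inl ⟨b, h, hx⟩
            · simp at hx
          · split_ifs at hx with h
            · exact Or.inr ⟨b, h, hx⟩
            · simp at hx
        · rintro (⟨b, hb, hx⟩ | ⟨b, hb, hx⟩)
          · exact ⟨b, Or.inl hb, Or.inl (by simp [hb, hx])⟩
          · exact ⟨b, Or.inr hb, Or.inr (by simp [hb, hx])⟩
      have hpt : ∀ b ∈ B ∪ B', D.δ (insert (b : X) (As'' b)) ≤
          (if b ∈ B then D.δ (insert (b : X) (As b)) else 0) +
          (if b ∈ B' then D.δ (insert (b : X) (As' b)) else 0) := by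
        intro b hb
        by_cases h1 : b ∈ B <;> by_cases h2 : b ∈ B'
        · rw [if_pos h1, if_pos h2]
          have e1 : As'' b = As b ∪ As' b := by rw [hAs'']; simp [h1, h2]
          rw [e1]
          have t1 : D.δ (insert (b : X) (As b) ∪ As' b) ≤
              D.δ (insert (b : X) (As b) ∪ {(b : X)}) + D.δ ({(b : X)} ∪ As' b) :=
            D.triangle _ {(b : X)} _ (by simp)
          have e2 : insert (b : X) (As b) ∪ {(b : X)} = insert (b : X) (As b) := by
            rw [union_single]
            exact Finset.insert_idem _ _
          have e3 : {(b : X)} ∪ As' b = insert (b : X) (As' b) := by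
            rw [← Finset.insert_eq]
          rw [e2, e3] at t1
          rw [← Finset.insert_union]
          linarith
        · rw [if_pos h1, if_neg h2, add_zero]
          have e1 : As'' b = As b := by rw [hAs'']; simp [h1, h2]
          rw [e1]
        · rw [if_neg h1, if_pos h2, zero_add]
          have e1 : As'' b = As' b := by rw [hAs'']; simp [h1, h2]
          rw [e1]
        · simp at hb; tauto
      have hsum : ∑ b ∈ B ∪ B', D.δ (insert (b : X) (As'' b)) ≤
          ∑ b ∈ B, D.δ (insert (b : X) (As b)) + ∑ b ∈ B', D.δ (insert (b : X) (As' b)) := by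
        calc ∑ b ∈ B ∪ B', D.δ (insert (b : X) (As'' b))
            ≤ ∑ b ∈ B ∪ B', ((if b ∈ B then D.δ (insert (b : X) (As b)) else 0) +
              (if b ∈ B' then D.δ (insert (b : X) (As' b)) else 0)) := Finset.sum_le_sum hpt
          _ = ∑ b ∈ B ∪ B', (if b ∈ B then D.δ (insert (b : X) (As b)) else 0) +
              ∑ b ∈ B ∪ B', (if b ∈ B' then D.δ (insert (b : X) (As' b)) else 0) :=
              Finset.sum_add_distrib
          _ = ∑ b ∈ B, D.δ (insert (b : X) (As b)) +
              ∑ b ∈ B', D.δ (insert (b : X) (As' b)) := by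
              rw [Finset.sum_ite_mem, Finset.sum_ite_mem,
                Finset.union_inter_cancel_left, Finset.union_inter_cancel_right]
      have hmem : (f (B ∪ B') + ∑ b ∈ B ∪ B', D.δ (insert (b : X) (As'' b))) ∈
          extSet D S f (A ∪ A') := ⟨B ∪ B', As'', hBU, rfl⟩
      have h0 := extFun_le_of_mem D hf hmem
      have hsub := hf.subadd B B'
      have h3 := add_le_add hsub hsum
      linarith
    have h1 : ∀ r' ∈ extSet D S f A', extFun D S f (A ∪ A') - r' ≤ extFun D S f A := by
      intro r' hr'
      refine le_extFun D hSne fun r hr => ?_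
      have := key r hr r' hr'
      linarith
    have h2 : extFun D S f (A ∪ A') - extFun D S f A ≤ extFun D S f A' := by
      refine le_extFun D hSne fun r' hr' => ?_
      have := h1 r' hr'
      linarith
    linarith

lemma extFun_agree (hf : IsAdmissible (D.restrict S) f) (A : Finset S) :
    extFun D S f (A.image Subtype.val) = f A := by
  letI instS : DecidableEq S := fun a b => Classical.propDecidable (a = b)
  have hmem : (f A : ℝ) ∈ extSet D S f (A.image Subtype.val) := by
    refine ⟨A, fun b => {(b : X)}, ?_, ?_⟩
    · simp [Finset.biUnion_singleton]
    · simp [Finset.pair_eq_singleton, delta_singleton]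
  refine le_antisymm (extFun_le_of_mem D hf hmem) ?_
  rcases A.eq_empty_or_nonempty with rfl | ⟨a₀, ha₀⟩
  · rw [hf.empty, Finset.image_empty]
    have h0 : (0 : ℝ) ∈ extSet D S f (∅ : Finset X) :=
      ⟨∅, fun _ => ∅, by simp, by simp [hf.empty]⟩
    refine le_csInf ⟨0, h0⟩ fun r hr => ?_
    have h1 := mem_extSet_ge D hf hr
    have h2 := delta_empty D
    linarith
  · have hSne : S.Nonempty := ⟨(a₀ : X), a₀.2⟩
    refine le_extFun D hSne ?_
    rintro r ⟨B, As, hBA, rfl⟩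
    set As'' : S → Finset S := fun b => A.filter (fun a => (a : X) ∈ As b) with hAs''
    have him : ∀ b ∈ B, (As'' b).image Subtype.val = As b := by
      intro b hb
      ext x
      simp only [hAs'', Finset.mem_image, Finset.mem_filter]
      constructor
      · rintro ⟨a, ⟨_, ha2⟩, rfl⟩
        exact ha2
      · intro hx
        have hx' : x ∈ A.image Subtype.val := by
          rw [← hBA]
          exact Finset.mem_biUnion.mpr ⟨b, hb, hx⟩
        obtain ⟨a, ha, rfl⟩ := Finset.mem_image.mp hx'
        exact ⟨a, ⟨ha, hx⟩, rfl⟩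
    have hBU : B.biUnion As'' = A := by
      apply Finset.image_injective Subtype.val_injective
      rw [Finset.biUnion_image, Finset.biUnion_congr rfl him, hBA]
    have key := tri_biUnion (D.restrict S) (fun A B C hC => hf.tri A B C hC) B id As'' ∅
    rw [Finset.empty_union, Finset.empty_union, hBU, Finset.image_id] at key
    have hcong : (∑ b ∈ B, (D.restrict S).δ (insert (id b) (As'' b))) =
        ∑ b ∈ B, D.δ (insert (b : X) (As b)) := by
      refine Finset.sum_congr rfl fun b hb => ?_
      show D.δ ((insert b (As'' b)).image Subtype.val) = _
      rw [Finset.image_insert, him b hb]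
    rw [hcong] at key
    exact key

end Ext

end DivAux

set_option maxHeartbeats 2000000 in
/-- If a complete diversity has a dense subset whose restricted diversity has the
approximate extension property, then the whole diversity has it too. -/
theorem stmt11 {X : Type*} (D : Diversity X) (hc : D.CompleteD) (S : Set X)
    (hdense : ∀ x : X, ∀ ε : ℝ, 0 < ε → ∃ y ∈ S, D.δ {x, y} < ε)
    (hS : (D.restrict S).ApproxExtensionProp) :
    D.ApproxExtensionProp := by
  intro F f hf ε hε
  letI instSd : DecidableEq S := fun a b => Classical.propDecidable (a = b)
  rcases F.eq_empty_or_nonempty with rfl | hFne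
  · -- F = ∅ : get any point of S via hS applied to the zero function
    have hg0 : IsAdmissible ((D.restrict S).restrict (((∅ : Finset S) : Set S)))
        (fun _ => (0 : ℝ)) := by
      constructor
      · rfl
      · intro A
        have hA : A = ∅ := Finset.eq_empty_of_forall_notMem fun a _ => absurd a.2 (by simp)
        rw [hA]
        exact le_of_eq (DivAux.delta_empty _)
      · intro A B C _
        exact le_add_of_nonneg_right (((D.restrict S).restrict _).nonneg _)
      · intro _ _; norm_num
    obtain ⟨x₀, -⟩ := hS ∅ (fun _ => 0) hg0 1 one_pos
    refine ⟨(x₀ : X), fun A => ?_⟩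
    have hA : A = ∅ := Finset.eq_empty_of_forall_notMem fun a _ => absurd a.2 (by simp)
    rw [hA, hf.empty]
    simpa [LawfulSingleton.insert_empty_eq, DivAux.delta_singleton] using hε.le
  · -- main case
    set η : ℝ := ε / (4 * ((F.card : ℝ) + 1)) with hηdef
    have hηpos : 0 < η := by rw [hηdef]; positivity
    have hkey : (F.card : ℝ) * η ≤ ε / 4 := by
      rw [hηdef, ← mul_div_assoc]
      rw [div_le_div_iff₀ (show (0:ℝ) < 4 * ((F.card:ℝ)+1) by positivity) (by norm_num : (0:ℝ) < 4)]
      nlinarith [hε.le, Nat.cast_nonneg (α := ℝ) F.card]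
    have hch : ∀ a : X, ∃ y, y ∈ S ∧ D.δ {a, y} < η := by
      intro a
      obtain ⟨y, h1, h2⟩ := hdense a η hηpos
      exact ⟨y, h1, h2⟩
    choose φ hφS hφd using hch
    have hFne' : ((F : Set X)).Nonempty := by
      obtain ⟨a, ha⟩ := hFne
      exact ⟨a, Finset.mem_coe.mpr ha⟩
    have hadmX : IsAdmissible D (extFun D (F : Set X) f) :=
      DivAux.extFun_admissible D hf hFne'
    set Fs : Finset S := F.attach.image (fun a => (⟨φ a.1, hφS a.1⟩ : S)) with hFs
    set g : Finset ((Fs : Set S)) → ℝ :=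
      fun A => extFun D (F : Set X) f ((A.image Subtype.val).image Subtype.val) with hg
    have hgadm : IsAdmissible ((D.restrict S).restrict (Fs : Set S)) g := by
      constructor
      · simp [hg, hadmX.empty]
      · intro A
        simp only [hg, DivAux.restrict_δ]
        exact hadmX.le _
      · intro A B C hC
        simp only [hg, DivAux.restrict_δ, Finset.image_union]
        exact hadmX.tri _ _ _ ((hC.image _).image _)
      · intro A B
        simp only [hg, Finset.image_union]
        exact hadmX.subadd _ _
    obtain ⟨xs, hxs⟩ := hS Fs g hgadm (ε / 2) (by positivity)
    set ψ : (((F : Set X)) : Type _) → (((Fs : Set S)) : Type _) :=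
      fun a => ⟨⟨φ (a : X), hφS _⟩, Finset.mem_coe.mpr
        (Finset.mem_image.mpr ⟨⟨(a : X), Finset.mem_coe.mp a.2⟩, F.mem_attach _, rfl⟩)⟩
      with hψ
    refine ⟨(xs : X), fun A => ?_⟩
    have hAdF : ∀ a ∈ A.image Subtype.val, a ∈ F := by
      intro a ha
      obtain ⟨b, hb, rfl⟩ := Finset.mem_image.mp ha
      exact Finset.mem_coe.mp b.2
    have hπ : ((A.image ψ).image Subtype.val).image Subtype.val
        = (A.image Subtype.val).image φ := by
      rw [Finset.image_image, Finset.image_image, Finset.image_image]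
      rfl
    have hb2 := hxs (A.image ψ)
    have e5 : (D.restrict S).δ (insert xs ((A.image ψ).image Subtype.val))
        = D.δ (insert (xs : X) ((A.image Subtype.val).image φ)) := by
      show D.δ ((insert xs ((A.image ψ).image Subtype.val)).image Subtype.val) = _
      rw [Finset.image_insert, hπ]
    simp only [hg] at hb2
    rw [e5, hπ] at hb2
    have habs := abs_le.mp hb2
    have t1 := DivAux.swap_le D (DivAux.tri_delta D) φ (A.image Subtype.val) {(xs : X)}
    have t2 := DivAux.swap_ge D (DivAux.tri_delta D) φ (A.image Subtype.val) {(xs : X)}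
    have t3 := DivAux.swap_le D (fun A B C hC => hadmX.tri A B C hC) φ
      (A.image Subtype.val) ∅
    have t4 := DivAux.swap_ge D (fun A B C hC => hadmX.tri A B C hC) φ
      (A.image Subtype.val) ∅
    rw [Finset.empty_union, Finset.empty_union] at t3 t4
    rw [← Finset.insert_eq, ← Finset.insert_eq] at t1 t2
    have e4 : extFun D (F : Set X) f (A.image Subtype.val) = f A :=
      DivAux.extFun_agree D hf A
    have hcard : (A.image Subtype.val).card ≤ F.card :=
      Finset.card_le_card fun a ha => hAdF a ha
    have hsb : (∑ a ∈ A.image Subtype.val, D.δ {a, φ a}) ≤ (F.card : ℝ) * η := by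
      calc (∑ a ∈ A.image Subtype.val, D.δ {a, φ a})
          ≤ ∑ _a ∈ A.image Subtype.val, η := Finset.sum_le_sum fun a _ => (hφd a).le
        _ = ((A.image Subtype.val).card : ℝ) * η := by
            rw [Finset.sum_const, nsmul_eq_mul]
        _ ≤ (F.card : ℝ) * η :=
            mul_le_mul_of_nonneg_right (Nat.cast_le.mpr hcard) hηpos.le
    rw [abs_le]
    constructor <;> linarith
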